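/- arXiv:1605.07862 — 5 statements merged into one kernel-verified Lean document; each statement's English description precedes it below -/
import Mathlib

section
/- Let V ⊆ ℂ be open and let x, y, w : ℂ → ℂ be functions satisfying the ODE system (★) at every point of V. Let a, b, c, d ∈ ℂ with ad − bc = 1, and let U ⊆ ℂ be an open set such that for every t ∈ U one has ct + d ≠ 0 and (at + b)/(ct + d) ∈ V. Define x^A(t) = (ct + d)⁻¹ · x((at + b)/(ct + d)), y^A(t) = (ct + d)⁻¹ · y((at + b)/(ct + d)), and w^A(t) = (ct + d)⁻² · w((at + b)/(ct + d)) − c/(ct + d). Then the triple (x^A, y^A, w^A) satisfies the ODE system (★) at every point of U. -/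
open Complex

private lemma alg1 (c e X Y W : ℂ) (he : e ≠ 0) :
    e⁻¹ * X * (2 * (e⁻¹ * Y) ^ 2 - (e⁻¹ * X) ^ 2 + ((e ^ 2)⁻¹ * W - c / e)) =
      -c / e ^ 2 * X + e⁻¹ * (X * (2 * Y ^ 2 - X ^ 2 + W) * (e ^ 2)⁻¹) := by
  have h6 : e⁻¹ ^ 6 * e ^ 6 = 1 := by
    rw [inv_pow]; exact inv_mul_cancel₀ (pow_ne_zero _ he)
  field_simp
  ring

private lemma alg3 (c e X W : ℂ) (he : e ≠ 0) :
    ((e ^ 2)⁻¹ * W - c / e) ^ 2 - (e⁻¹ * X) ^ 4 =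
      -(2 * e * c) / (e ^ 2) ^ 2 * W + (e ^ 2)⁻¹ * ((W ^ 2 - X ^ 4) * (e ^ 2)⁻¹) -
        -(c * c) / e ^ 2 := by
  have h10 : e⁻¹ ^ 10 * e ^ 10 = 1 := by
    rw [inv_pow]; exact inv_mul_cancel₀ (pow_ne_zero _ he)
  field_simp
  ring

/-- If `(x, y, w)` satisfies the ODE system (★) on an open set `V ⊆ ℂ`, and
`A = (a, b; c, d) ∈ SL(2, ℂ)`, then the transformed triple `(x^A, y^A, w^A)` satisfies
the ODE system (★) on any open set `U` on which the Möbius transformation is defined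
and maps into `V`. -/
theorem transformed_triple_satisfies_ode
    (V : Set ℂ) (hV : IsOpen V) (x y w : ℂ → ℂ)
    (hx : ∀ t ∈ V, HasDerivAt x (x t * (2 * (y t) ^ 2 - (x t) ^ 2 + w t)) t)
    (hy : ∀ t ∈ V, HasDerivAt y (y t * (2 * (x t) ^ 2 - (y t) ^ 2 + w t)) t)
    (hw : ∀ t ∈ V, HasDerivAt w ((w t) ^ 2 - (x t) ^ 4) t)
    (a b c d : ℂ) (hdet : a * d - b * c = 1)
    (U : Set ℂ) (hU : IsOpen U)
    (hU1 : ∀ t ∈ U, c * t + d ≠ 0)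
    (hU2 : ∀ t ∈ U, (a * t + b) / (c * t + d) ∈ V)
    (xA yA wA : ℂ → ℂ)
    (hxA : ∀ t, xA t = (c * t + d)⁻¹ * x ((a * t + b) / (c * t + d)))
    (hyA : ∀ t, yA t = (c * t + d)⁻¹ * y ((a * t + b) / (c * t + d)))
    (hwA : ∀ t, wA t = ((c * t + d) ^ 2)⁻¹ * w ((a * t + b) / (c * t + d)) - c / (c * t + d)) :
    ∀ t ∈ U,
      HasDerivAt xA (xA t * (2 * (yA t) ^ 2 - (xA t) ^ 2 + wA t)) t ∧
      HasDerivAt yA (yA t * (2 * (xA t) ^ 2 - (yA t) ^ 2 + wA t)) t ∧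
      HasDerivAt wA ((wA t) ^ 2 - (xA t) ^ 4) t := by
  have hxA' : xA = fun t => (c * t + d)⁻¹ * x ((a * t + b) / (c * t + d)) := funext hxA
  have hyA' : yA = fun t => (c * t + d)⁻¹ * y ((a * t + b) / (c * t + d)) := funext hyA
  have hwA' : wA = fun t => ((c * t + d) ^ 2)⁻¹ * w ((a * t + b) / (c * t + d)) - c / (c * t + d) :=
    funext hwA
  subst hxA' hyA' hwA'
  intro t ht
  have hh : c * t + d ≠ 0 := hU1 t ht
  set s : ℂ := (a * t + b) / (c * t + d) with hs
  have hsV : s ∈ V := hU2 t ht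
  have hden : HasDerivAt (fun t : ℂ => c * t + d) c t := by
    simpa using ((hasDerivAt_id t).const_mul c).add_const d
  have hnum : HasDerivAt (fun t : ℂ => a * t + b) a t := by
    simpa using ((hasDerivAt_id t).const_mul a).add_const b
  have hg : HasDerivAt (fun t : ℂ => (a * t + b) / (c * t + d)) (((c * t + d) ^ 2)⁻¹) t := by
    have h1 : a * (c * t + d) - (a * t + b) * c = 1 := by linear_combination hdet
    simpa [h1] using hnum.fun_div hden hh
  have hinv : HasDerivAt (fun t : ℂ => (c * t + d)⁻¹) (-c / (c * t + d) ^ 2) t :=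
    hden.inv hh
  have hxg : HasDerivAt (fun t : ℂ => x ((a * t + b) / (c * t + d)))
      (x s * (2 * (y s) ^ 2 - (x s) ^ 2 + w s) * ((c * t + d) ^ 2)⁻¹) t :=
    (hx s hsV).comp t hg
  have hyg : HasDerivAt (fun t : ℂ => y ((a * t + b) / (c * t + d)))
      (y s * (2 * (x s) ^ 2 - (y s) ^ 2 + w s) * ((c * t + d) ^ 2)⁻¹) t :=
    (hy s hsV).comp t hg
  have hwg : HasDerivAt (fun t : ℂ => w ((a * t + b) / (c * t + d)))
      (((w s) ^ 2 - (x s) ^ 4) * ((c * t + d) ^ 2)⁻¹) t :=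
    (hw s hsV).comp t hg
  have hinv2 : HasDerivAt (fun t : ℂ => ((c * t + d) ^ 2)⁻¹)
      (-(2 * (c * t + d) * c) / ((c * t + d) ^ 2) ^ 2) t := by
    have hsq : HasDerivAt (fun t : ℂ => (c * t + d) ^ 2) (2 * (c * t + d) * c) t := by
      simpa using (hden.fun_pow 2)
    exact hsq.inv (pow_ne_zero 2 hh)
  have hcd : HasDerivAt (fun t : ℂ => c / (c * t + d)) (-(c * c) / (c * t + d) ^ 2) t := by
    simpa using (hasDerivAt_const t c).fun_div hden hh
  refine ⟨?_, ?_, ?_⟩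
  · have key := hinv.fun_mul hxg
    convert key using 1
    · rfl
    · rfl
    beta_reduce
    rw [← hs]
    exact alg1 c (c * t + d) (x s) (y s) (w s) hh
  · have key := hinv.fun_mul hyg
    convert key using 1
    · rfl
    · rfl
    beta_reduce
    rw [← hs]
    exact alg1 c (c * t + d) (y s) (x s) (w s) hh
  · have key := (hinv2.fun_mul hwg).fun_sub hcd
    convert key using 1
    · rfl
    · rfl
    beta_reduce
    rw [← hs]
    exact alg3 c (c * t + d) (x s) (w s) hh
end

section
/- For every q ∈ ℂ with |q| < 1, the identity q²·(∑_{n∈ℤ} q^{2n(n+1)})⁴ = 4·(∑_{n∈ℤ} q^{4n²})²·(∑_{n∈ℤ} q^{(2n+1)²})² holds. (Equivalently, with x(q) = θ₃(q⁸)², y(q) = θ₂(q⁸)², z(q) = θ₂(q⁴)², one has z(q)² = 4·x(q)·y(q).) -/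
open Function

lemma aux_summable_norm (q : ℂ) (hq0 : q ≠ 0) (hq : ‖q‖ < 1) (e : ℤ → ℤ)
    (hg : ∀ n : ℤ, (n.natAbs : ℤ) ≤ e n + 1) :
    Summable (fun n : ℤ => ‖q ^ (e n)‖) := by
  have hr0 : 0 < ‖q‖ := norm_pos_iff.2 hq0
  have hsum : Summable (fun n : ℤ => ‖q‖⁻¹ * ‖q‖ ^ n.natAbs) := by
    apply Summable.mul_left
    apply Summable.of_nat_of_neg_add_one
    · simpa using summable_geometric_of_lt_one hr0.le hq
    · refine Summable.congr ((summable_geometric_of_lt_one hr0.le hq).mul_left ‖q‖)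
        (fun n => ?_)
      rw [show ((-((n:ℤ) + 1)).natAbs) = n + 1 by omega, pow_succ]
      ring
  apply Summable.of_nonneg_of_le (fun n => norm_nonneg _) _ hsum
  intro n
  rw [norm_zpow]
  calc ‖q‖ ^ (e n) ≤ ‖q‖ ^ ((n.natAbs : ℤ) - 1) :=
        zpow_le_zpow_right_of_le_one₀ hr0 hq.le (by linarith [hg n])
    _ = ‖q‖⁻¹ * ‖q‖ ^ n.natAbs := by
        rw [zpow_sub₀ (ne_of_gt hr0), zpow_one, zpow_natCast, div_eq_mul_inv, mul_comm]

lemma natAbs_le_A (n : ℤ) : (n.natAbs : ℤ) ≤ 2 * n * (n + 1) + 1 := by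
  obtain ⟨a, rfl | rfl⟩ := Int.eq_nat_or_neg n <;>
    simp only [Int.natAbs_neg, Int.natAbs_natCast] <;>
    nlinarith [sq_nonneg ((a : ℤ) - 1), (by positivity : (0:ℤ) ≤ (a : ℤ))]

lemma natAbs_le_B (n : ℤ) : (n.natAbs : ℤ) ≤ 4 * n ^ 2 + 1 := by
  obtain ⟨a, rfl | rfl⟩ := Int.eq_nat_or_neg n <;>
    simp only [Int.natAbs_neg, Int.natAbs_natCast] <;>
    nlinarith [sq_nonneg ((a : ℤ) - 1), (by positivity : (0:ℤ) ≤ (a : ℤ))]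

lemma natAbs_le_C (n : ℤ) : (n.natAbs : ℤ) ≤ 4 * n * (n + 1) + 1 := by
  obtain ⟨a, rfl | rfl⟩ := Int.eq_nat_or_neg n <;>
    simp only [Int.natAbs_neg, Int.natAbs_natCast] <;>
    nlinarith [sq_nonneg ((a : ℤ) - 1), (by positivity : (0:ℤ) ≤ (a : ℤ))]

/-- the theta-constant identity `z(q)² = 4·x(q)·y(q)`, i.e.
`θ₂(q⁴)⁴ = 4·θ₃(q⁸)²·θ₂(q⁸)²` written out as `q`-series. -/
theorem theta_identity_z_sq_eq_four_xy (q : ℂ) (hq : ‖q‖ < 1) :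
    q ^ 2 * (∑' n : ℤ, q ^ (2 * n * (n + 1))) ^ 4 =
      4 * (∑' n : ℤ, q ^ (4 * n ^ 2)) ^ 2 * (∑' n : ℤ, q ^ ((2 * n + 1) ^ 2)) ^ 2 := by
  rcases eq_or_ne q 0 with rfl | hq0
  · have h1 : (∑' n : ℤ, (0:ℂ) ^ ((2 * n + 1) ^ 2)) = 0 := by
      have h2 : ∀ n : ℤ, (0:ℂ) ^ ((2 * n + 1) ^ 2) = 0 := fun n =>
        zero_zpow _ (pow_ne_zero _ (by omega))
      rw [tsum_congr h2, tsum_zero]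
    rw [h1]
    ring
  have hq' : ‖q‖ < 1 := hq
  have hA : Summable (fun n : ℤ => ‖q ^ (2 * n * (n + 1))‖) :=
    aux_summable_norm q hq0 hq' _ natAbs_le_A
  have hB : Summable (fun n : ℤ => ‖q ^ (4 * n ^ 2)‖) :=
    aux_summable_norm q hq0 hq' _ natAbs_le_B
  have hC : Summable (fun n : ℤ => ‖q ^ (4 * n * (n + 1))‖) :=
    aux_summable_norm q hq0 hq' _ natAbs_le_C
  set A := ∑' n : ℤ, q ^ (2 * n * (n + 1)) with hAdef
  set B := ∑' n : ℤ, q ^ (4 * n ^ 2) with hBdef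
  set C := ∑' n : ℤ, q ^ (4 * n * (n + 1)) with hCdef
  have hD : (∑' n : ℤ, q ^ ((2 * n + 1) ^ 2)) = q * C := by
    rw [hCdef, ← tsum_mul_left]
    refine tsum_congr fun n => ?_
    rw [show ((2 * n + 1) ^ 2 : ℤ) = 1 + 4 * n * (n + 1) by ring, zpow_add₀ hq0, zpow_one]
  -- the double sum
  set F : ℤ × ℤ → ℂ := fun p => q ^ (2 * p.1 * (p.1 + 1) + 2 * p.2 * (p.2 + 1)) with hFdef
  have hFeq : ∀ p : ℤ × ℤ, F p = q ^ (2 * p.1 * (p.1 + 1)) * q ^ (2 * p.2 * (p.2 + 1)) :=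
    fun p => zpow_add₀ hq0 _ _
  have hFsum : Summable F :=
    (summable_mul_of_summable_norm hA hA).congr fun p => (hFeq p).symm
  have hAA : A * A = ∑' p : ℤ × ℤ, F p := by
    rw [hAdef, tsum_mul_tsum_of_summable_norm hA hA]
    exact tsum_congr fun p => (hFeq p).symm
  set s : Set (ℤ × ℤ) := {p | (p.1 + p.2) % 2 = 0} with hsdef
  -- even part
  have heven : (∑' p : s, F p) = C * B := by
    rw [tsum_subtype]
    have i1inj : Function.Injective (fun c : ℤ × ℤ => ((c.1 + c.2, c.1 - c.2) : ℤ × ℤ)) := by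
      intro x y h
      simp only [Prod.mk.injEq, Prod.ext_iff] at h ⊢
      omega
    rw [← i1inj.tsum_eq ?hsupp]
    case hsupp =>
      rintro ⟨p1, p2⟩ hp
      have hps : (p1 + p2) % 2 = 0 := by
        by_contra hns
        exact hp (Set.indicator_of_notMem (s := s) (a := ((p1, p2) : ℤ × ℤ)) (fun hm => hns hm) F)
      refine ⟨((p1 + p2) / 2, (p1 - p2) / 2), ?_⟩
      simp only [Prod.mk.injEq]
      omega
    have hterm : ∀ c : ℤ × ℤ, s.indicator F ((c.1 + c.2, c.1 - c.2) : ℤ × ℤ) =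
        q ^ (4 * c.1 * (c.1 + 1)) * q ^ (4 * c.2 ^ 2) := by
      intro c
      rw [Set.indicator_of_mem (by simp only [hsdef, Set.mem_setOf_eq]; omega) F, hFdef]
      simp only
      rw [← zpow_add₀ hq0]
      congr 1
      ring
    rw [tsum_congr hterm, ← tsum_mul_tsum_of_summable_norm hC hB]
  -- odd part
  have hodd : (∑' p : ↑sᶜ, F p) = B * C := by
    rw [tsum_subtype]
    have i2inj : Function.Injective (fun c : ℤ × ℤ => ((c.1 + c.2, c.1 - c.2 - 1) : ℤ × ℤ)) := by
      intro x y h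
      simp only [Prod.mk.injEq, Prod.ext_iff] at h ⊢
      omega
    rw [← i2inj.tsum_eq ?hsupp2]
    case hsupp2 =>
      rintro ⟨p1, p2⟩ hp
      have hps : ¬ ((p1 + p2) % 2 = 0) := by
        intro hns
        exact hp (Set.indicator_of_notMem (s := sᶜ) (a := ((p1, p2) : ℤ × ℤ)) (fun hm => hm hns) F)
      refine ⟨((p1 + p2 + 1) / 2, (p1 - p2 - 1) / 2), ?_⟩
      simp only [Prod.mk.injEq]
      omega
    have hterm : ∀ c : ℤ × ℤ, (sᶜ).indicator F ((c.1 + c.2, c.1 - c.2 - 1) : ℤ × ℤ) =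
        q ^ (4 * c.1 ^ 2) * q ^ (4 * c.2 * (c.2 + 1)) := by
      intro c
      rw [Set.indicator_of_mem (by simp only [hsdef, Set.mem_compl_iff, Set.mem_setOf_eq]; omega) F, hFdef]
      simp only
      rw [← zpow_add₀ hq0]
      congr 1
      ring
    rw [tsum_congr hterm, ← tsum_mul_tsum_of_summable_norm hB hC]
  have key : A * A = 2 * (B * C) := by
    rw [hAA, ← Summable.tsum_add_tsum_compl (s := s) (hFsum.subtype s) (hFsum.subtype sᶜ),
      heven, hodd]
    ring
  calc q ^ 2 * A ^ 4 = q ^ 2 * (A * A) ^ 2 := by ring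
    _ = q ^ 2 * (2 * (B * C)) ^ 2 := by rw [key]
    _ = 4 * B ^ 2 * (q * C) ^ 2 := by ring
    _ = 4 * B ^ 2 * (∑' n : ℤ, q ^ ((2 * n + 1) ^ 2)) ^ 2 := by rw [hD]
end

section
/- For every q ∈ ℂ with |q| < 1, the identity 2·(∑_{n∈ℤ} q^{4n²})² = (∑_{n∈ℤ} q^{2n²})² + (∑_{n∈ℤ} (−1)ⁿ q^{2n²})² holds. (Equivalently, 2·θ₃(q⁸)² = θ₃(q⁴)² + θ₄(q⁴)², the double-argument formula for theta constants.) -/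
set_option maxHeartbeats 1000000

lemma my_summable_aux {q : ℂ} (hq : ‖q‖ < 1) (c : ℤ) (hc : 1 ≤ c) :
    Summable fun n : ℤ => ‖q ^ (c * n ^ 2)‖ := by
  have h0 : (0:ℝ) ≤ ‖q‖ := norm_nonneg q
  have hgeo : Summable fun m : ℕ => ‖q‖ ^ m :=
    summable_geometric_of_lt_one h0 hq
  have hbase : Summable fun n : ℤ => ‖q‖ ^ n.natAbs := by
    apply Summable.of_nat_of_neg <;> simpa using hgeo
  apply hbase.of_nonneg_of_le (fun n => norm_nonneg _)
  intro n
  have hle : n.natAbs ≤ (c * n ^ 2).toNat := by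
    have : (n.natAbs : ℤ) ≤ c * n ^ 2 := by nlinarith [Int.natAbs_le_self_sq n, sq_nonneg n]
    omega
  have hexp : (c * n ^ 2) = ((c * n ^ 2).toNat : ℤ) := by
    have : 0 ≤ c * n ^ 2 := by positivity
    omega
  rw [hexp, norm_zpow, zpow_natCast]
  calc ‖q‖ ^ (c * n ^ 2).toNat ≤ ‖q‖ ^ n.natAbs :=
        pow_le_pow_of_le_one h0 hq.le hle
    _ = ‖q‖ ^ n.natAbs := rfl

/-- the double-argument formula `2·θ₃(q⁸)² = θ₃(q⁴)² + θ₄(q⁴)²`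
written out as `q`-series. -/
theorem theta_double_argument_sum (q : ℂ) (hq : ‖q‖ < 1) :
    2 * (∑' n : ℤ, q ^ (4 * n ^ 2)) ^ 2 =
      (∑' n : ℤ, q ^ (2 * n ^ 2)) ^ 2 + (∑' n : ℤ, (-1 : ℂ) ^ n * q ^ (2 * n ^ 2)) ^ 2 := by
  by_cases hq0 : q = 0
  · subst hq0
    have h1 : ∀ c : ℤ, 1 ≤ c → (∑' n : ℤ, (0:ℂ) ^ (c * n ^ 2)) = 1 := by
      intro c hc
      rw [tsum_eq_single 0]
      · norm_num
      · intro n hn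
        rw [zero_zpow _ (by positivity)]
    have h2 : (∑' n : ℤ, (-1 : ℂ) ^ n * (0:ℂ) ^ (2 * n ^ 2)) = 1 := by
      rw [tsum_eq_single 0]
      · norm_num
      · intro n hn
        rw [zero_zpow _ (by positivity), mul_zero]
    rw [h1 4 (by norm_num), h1 2 (by norm_num), h2]
    norm_num
  · have s4 := my_summable_aux hq 4 (by norm_num)
    have s2 := my_summable_aux hq 2 (by norm_num)
    have s3 : Summable fun n : ℤ => ‖(-1 : ℂ) ^ n * q ^ (2 * n ^ 2)‖ := by
      refine s2.congr fun n => ?_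
      rw [norm_mul, norm_zpow]
      norm_num
    have hGs : Summable (fun p : ℤ × ℤ => q ^ (2 * p.1 ^ 2) * q ^ (2 * p.2 ^ 2)) :=
      summable_mul_of_summable_norm (f := fun n : ℤ => q ^ (2 * n ^ 2))
        (g := fun n : ℤ => q ^ (2 * n ^ 2)) s2 s2
    have hHs : Summable (fun p : ℤ × ℤ =>
        ((-1 : ℂ) ^ p.1 * q ^ (2 * p.1 ^ 2)) * ((-1 : ℂ) ^ p.2 * q ^ (2 * p.2 ^ 2))) :=
      summable_mul_of_summable_norm (f := fun n : ℤ => (-1 : ℂ) ^ n * q ^ (2 * n ^ 2))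
        (g := fun n : ℤ => (-1 : ℂ) ^ n * q ^ (2 * n ^ 2)) s3 s3
    have lhs_eq : 2 * (∑' n : ℤ, q ^ (4 * n ^ 2)) ^ 2 =
        ∑' p : ℤ × ℤ, (2 : ℂ) * (q ^ (4 * p.1 ^ 2) * q ^ (4 * p.2 ^ 2)) := by
      rw [sq, tsum_mul_tsum_of_summable_norm (f := fun n : ℤ => q ^ (4 * n ^ 2)) (g := fun n : ℤ => q ^ (4 * n ^ 2)) s4 s4, tsum_mul_left]
    have rhs_eq : (∑' n : ℤ, q ^ (2 * n ^ 2)) ^ 2 +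
        (∑' n : ℤ, (-1 : ℂ) ^ n * q ^ (2 * n ^ 2)) ^ 2 =
        ∑' p : ℤ × ℤ, (q ^ (2 * p.1 ^ 2) * q ^ (2 * p.2 ^ 2) +
          ((-1 : ℂ) ^ p.1 * q ^ (2 * p.1 ^ 2)) * ((-1 : ℂ) ^ p.2 * q ^ (2 * p.2 ^ 2))) := by
      rw [sq, sq, tsum_mul_tsum_of_summable_norm (f := fun n : ℤ => q ^ (2 * n ^ 2)) (g := fun n : ℤ => q ^ (2 * n ^ 2)) s2 s2,
        tsum_mul_tsum_of_summable_norm (f := fun n : ℤ => (-1 : ℂ) ^ n * q ^ (2 * n ^ 2)) (g := fun n : ℤ => (-1 : ℂ) ^ n * q ^ (2 * n ^ 2)) s3 s3, Summable.tsum_add hGs hHs]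
    rw [lhs_eq, rhs_eq]
    -- change of variables
    have hinj : Function.Injective (fun p : ℤ × ℤ => ((p.1 + p.2, p.1 - p.2) : ℤ × ℤ)) := by
      intro p p' h
      simp only [Prod.mk.injEq] at h
      have := h.1; have := h.2
      ext <;> omega
    have hHeq : ∀ m n : ℤ,
        ((-1 : ℂ) ^ m * q ^ (2 * m ^ 2)) * ((-1 : ℂ) ^ n * q ^ (2 * n ^ 2)) =
          (-1 : ℂ) ^ (m + n) * (q ^ (2 * m ^ 2) * q ^ (2 * n ^ 2)) := by
      intro m n
      rw [zpow_add₀ (by norm_num : (-1:ℂ) ≠ 0)]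
      ring
    have hsupp : Function.support (fun p : ℤ × ℤ =>
        q ^ (2 * p.1 ^ 2) * q ^ (2 * p.2 ^ 2) +
          ((-1 : ℂ) ^ p.1 * q ^ (2 * p.1 ^ 2)) * ((-1 : ℂ) ^ p.2 * q ^ (2 * p.2 ^ 2))) ⊆
        Set.range (fun p : ℤ × ℤ => ((p.1 + p.2, p.1 - p.2) : ℤ × ℤ)) := by
      intro p hp
      obtain ⟨m, n⟩ := p
      simp only [Function.mem_support] at hp
      by_cases he : Even (m + n)
      · obtain ⟨a, ha⟩ := he
        exact ⟨(a, m - a), by simp only [Prod.mk.injEq]; omega⟩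
      · exfalso
        apply hp
        have hodd : Odd (m + n) := Int.not_even_iff_odd.mp he
        rw [hHeq, hodd.neg_one_zpow]
        ring
    rw [← hinj.tsum_eq hsupp]
    congr 1
    ext p
    simp only
    have hexp : q ^ (2 * (p.1 + p.2) ^ 2) * q ^ (2 * (p.1 - p.2) ^ 2) =
        q ^ (4 * p.1 ^ 2) * q ^ (4 * p.2 ^ 2) := by
      rw [← zpow_add₀ hq0, ← zpow_add₀ hq0]
      ring_nf
    have hsign2 : (-1 : ℂ) ^ ((p.1 + p.2) + (p.1 - p.2)) = 1 := by
      have h2 : (p.1 + p.2) + (p.1 - p.2) = 2 * p.1 := by ring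
      rw [h2, zpow_mul]
      norm_num
    rw [hHeq, hsign2, one_mul, hexp]
    ring
end

section
/- For every q ∈ ℂ with |q| < 1, the identity 2·(∑_{n∈ℤ} q^{(2n+1)²})² = (∑_{n∈ℤ} q^{2n²})² − (∑_{n∈ℤ} (−1)ⁿ q^{2n²})² holds. (Equivalently, 2·θ₂(q⁸)² = θ₃(q⁴)² − θ₄(q⁴)², the double-argument formula for theta constants.) -/
private lemma summable_norm_pow_aux (q : ℂ) (hq : ‖q‖ < 1) (e : ℤ → ℕ)
    (he : ∀ n : ℤ, n.natAbs ≤ e n) : Summable (fun n : ℤ => ‖q ^ e n‖) := by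
  have h0 : (0 : ℝ) ≤ ‖q‖ := norm_nonneg q
  have hgeo : Summable (fun n : ℕ => ‖q‖ ^ n) := summable_geometric_of_lt_one h0 hq
  have hbase : Summable (fun n : ℤ => ‖q‖ ^ n.natAbs) := by
    apply Summable.of_nat_of_neg
    · simpa using hgeo
    · simpa using hgeo
  apply hbase.of_nonneg_of_le (fun n => norm_nonneg _)
  intro n
  rw [norm_pow]
  exact pow_le_pow_of_le_one h0 hq.le (he n)

/-- the double-argument formula `2·θ₂(q⁸)² = θ₃(q⁴)² − θ₄(q⁴)²`
written out as `q`-series. -/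
theorem theta_double_argument_difference (q : ℂ) (hq : ‖q‖ < 1) :
    2 * (∑' n : ℤ, q ^ ((2 * n + 1) ^ 2)) ^ 2 =
      (∑' n : ℤ, q ^ (2 * n ^ 2)) ^ 2 - (∑' n : ℤ, (-1 : ℂ) ^ n * q ^ (2 * n ^ 2)) ^ 2 := by
  set o : ℤ → ℕ := fun x => ((2 * x + 1) ^ 2).natAbs with ho_def
  set e : ℤ → ℕ := fun m => (2 * m ^ 2).natAbs with he_def
  have hoc : ∀ x : ℤ, ((o x : ℤ)) = (2 * x + 1) ^ 2 := fun x =>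
    Int.natAbs_of_nonneg (by positivity)
  have hec : ∀ m : ℤ, ((e m : ℤ)) = 2 * m ^ 2 := fun m =>
    Int.natAbs_of_nonneg (by positivity)
  -- rewrite zpow as pow
  have hA : ∀ n : ℤ, q ^ ((2 * n + 1) ^ 2) = q ^ (o n) := by
    intro n; rw [← hoc n, zpow_natCast]
  have hB : ∀ n : ℤ, q ^ (2 * n ^ 2) = q ^ (e n) := by
    intro n; rw [← hec n, zpow_natCast]
  -- lower bounds for exponents
  have ho_ge : ∀ n : ℤ, n.natAbs ≤ o n := by
    intro n
    have h1 : n.natAbs ≤ (2 * n + 1).natAbs := by omega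
    have h2 : (2 * n + 1).natAbs ≤ (2 * n + 1).natAbs ^ 2 :=
      Nat.le_self_pow two_ne_zero _
    calc n.natAbs ≤ (2 * n + 1).natAbs ^ 2 := le_trans h1 h2
      _ = o n := by simp [ho_def, Int.natAbs_pow]
  have he_ge : ∀ n : ℤ, n.natAbs ≤ e n := by
    intro n
    have h2 : n.natAbs ≤ n.natAbs ^ 2 := Nat.le_self_pow two_ne_zero _
    calc n.natAbs ≤ 2 * n.natAbs ^ 2 := by omega
      _ = e n := by simp [he_def, Int.natAbs_mul, Int.natAbs_pow]
  -- summability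
  have hso : Summable (fun n : ℤ => ‖q ^ o n‖) := summable_norm_pow_aux q hq o ho_ge
  have hse : Summable (fun n : ℤ => ‖q ^ e n‖) := summable_norm_pow_aux q hq e he_ge
  have hse' : Summable (fun n : ℤ => ‖(-1 : ℂ) ^ n * q ^ e n‖) := by
    have : ∀ n : ℤ, ‖(-1 : ℂ) ^ n * q ^ e n‖ = ‖q ^ e n‖ := by
      intro n
      rw [norm_mul]
      simp
    simpa only [this] using hse
  -- rewrite the three sums
  rw [tsum_congr hA, tsum_congr hB,
    tsum_congr (fun n : ℤ => by rw [hB n] :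
      ∀ n : ℤ, (-1 : ℂ) ^ n * q ^ (2 * n ^ 2) = (-1 : ℂ) ^ n * q ^ (e n))]
  rw [sq, sq, sq, tsum_mul_tsum_of_summable_norm hso hso,
    tsum_mul_tsum_of_summable_norm hse hse, tsum_mul_tsum_of_summable_norm hse' hse',
    ← tsum_mul_left,
    ← ((summable_mul_of_summable_norm hse hse).hasSum.sub
      (summable_mul_of_summable_norm hse' hse').hasSum).tsum_eq]
  -- now both sides are single tsums over ℤ × ℤ; reindex
  set F : ℤ × ℤ → ℂ := fun p =>
    q ^ e p.1 * q ^ e p.2 - (-1 : ℂ) ^ p.1 * q ^ e p.1 * ((-1 : ℂ) ^ p.2 * q ^ e p.2)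
    with hF_def
  set g : ℤ × ℤ → ℤ × ℤ := fun p => (p.1 + p.2 + 1, p.1 - p.2) with hg_def
  have hg_inj : Function.Injective g := by
    intro p p' h
    simp only [hg_def, Prod.mk.injEq] at h
    have := h.1; have := h.2
    ext <;> omega
  have hm1 : (-1 : ℂ) ≠ 0 := by norm_num
  have hsupp : Function.support F ⊆ Set.range g := by
    intro p hp
    rcases p with ⟨m, n⟩
    by_contra hnot
    -- then m + n is even
    have heven : ∃ k : ℤ, m + n = 2 * k := by
      by_contra hodd
      push_neg at hodd
      refine hnot ⟨((m + n - 1) / 2, (m - n - 1) / 2), ?_⟩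
      have hparity : ∃ k : ℤ, m + n = 2 * k + 1 := by
        rcases Int.even_or_odd (m + n) with ⟨k, hk⟩ | ⟨k, hk⟩
        · exact absurd (by omega) (hodd k)
        · exact ⟨k, hk⟩
      obtain ⟨k, hk⟩ := hparity
      simp only [hg_def, Prod.mk.injEq]
      constructor <;> omega
    obtain ⟨k, hk⟩ := heven
    apply hp
    have hpow : (-1 : ℂ) ^ m * (-1 : ℂ) ^ n = 1 := by
      rw [← zpow_add₀ hm1, hk, zpow_mul]
      norm_num
    simp only [hF_def]
    rw [show (-1 : ℂ) ^ m * q ^ e m * ((-1 : ℂ) ^ n * q ^ e n) =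
      ((-1 : ℂ) ^ m * (-1 : ℂ) ^ n) * (q ^ e m * q ^ e n) from by ring, hpow, one_mul,
      sub_self]
  have hterm : ∀ p : ℤ × ℤ, 2 * (q ^ o p.1 * q ^ o p.2) = F (g p) := by
    rintro ⟨a, b⟩
    have hexp : o a + o b = e (a + b + 1) + e (a - b) := by
      have : ((o a + o b : ℕ) : ℤ) = ((e (a + b + 1) + e (a - b) : ℕ) : ℤ) := by
        push_cast [hoc, hec]
        ring
      exact_mod_cast this
    have hpow : (-1 : ℂ) ^ (a + b + 1) * (-1 : ℂ) ^ (a - b) = -1 := by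
      rw [← zpow_add₀ hm1, show a + b + 1 + (a - b) = 2 * a + 1 from by ring,
        zpow_add₀ hm1, zpow_mul]
      norm_num
    simp only [hF_def, hg_def]
    have hq2 : q ^ e (a + b + 1) * q ^ e (a - b) = q ^ o a * q ^ o b := by
      rw [← pow_add, ← pow_add, hexp]
    calc 2 * (q ^ o a * q ^ o b)
        = q ^ o a * q ^ o b - (-1) * (q ^ o a * q ^ o b) := by ring
      _ = q ^ e (a + b + 1) * q ^ e (a - b) -
          (-1 : ℂ) ^ (a + b + 1) * q ^ e (a + b + 1) *
            ((-1 : ℂ) ^ (a - b) * q ^ e (a - b)) := by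
          rw [hq2]; rw [show (-1 : ℂ) ^ (a + b + 1) * q ^ e (a + b + 1) *
            ((-1 : ℂ) ^ (a - b) * q ^ e (a - b)) =
            ((-1 : ℂ) ^ (a + b + 1) * (-1 : ℂ) ^ (a - b)) *
              (q ^ e (a + b + 1) * q ^ e (a - b)) from by ring, hpow, hq2]
  calc ∑' p : ℤ × ℤ, 2 * (q ^ o p.1 * q ^ o p.2)
      = ∑' p : ℤ × ℤ, F (g p) := tsum_congr hterm
    _ = ∑' p : ℤ × ℤ, F p := hg_inj.tsum_eq hsupp
end

section
/- The logarithmic derivative of the Jacobi theta constant θ₃ at τ = i satisfies X₃(i) := 2·θ₃'(i)/θ₃(i) = i/2. Equivalently, at the level of the real series: ∑_{n∈ℤ} n²·exp(−π·n²) = (1/(4π)) · ∑_{n∈ℤ} exp(−π·n²). -/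
open Complex Real

/-- The Jacobi theta constant `θ₃(τ) = ∑_{n∈ℤ} exp(πiτn²)`. -/
noncomputable def theta3 (τ : ℂ) : ℂ :=
  ∑' n : ℤ, Complex.exp ((Real.pi : ℂ) * I * τ * (n : ℂ) ^ 2)

lemma theta3_eq : theta3 = jacobiTheta := by
  funext τ; unfold theta3 jacobiTheta
  exact tsum_congr fun n => by ring_nf

lemma jtterm_eq (n : ℤ) :
    jacobiTheta₂_term n 0 I = ((Real.exp (-Real.pi * (n:ℝ)^2) : ℝ) : ℂ) := by
  rw [jacobiTheta₂_term, show (2*(π:ℂ)*I*n*0 + π*I*n^2*I : ℂ)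
      = ((-Real.pi * (n:ℝ)^2 : ℝ) : ℂ) by push_cast; ring_nf; rw [I_sq]; ring,
    Complex.ofReal_exp]

lemma hsC : Summable (fun n : ℤ => jacobiTheta₂_term n 0 I) :=
  (summable_jacobiTheta₂_term_iff 0 I).mpr (by simp)

lemma hsR : Summable (fun n : ℤ => Real.exp (-Real.pi * (n:ℝ)^2)) := by
  have := hsC
  simp_rw [jtterm_eq] at this
  exact_mod_cast summable_ofReal.mp this

noncomputable def Bsum : ℝ := ∑' n : ℤ, Real.exp (-Real.pi * (n:ℝ)^2)

lemma Bpos : 0 < Bsum := hsR.tsum_pos (fun n => (Real.exp_pos _).le) 0 (by simp [Real.exp_pos])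

lemma jt_I : jacobiTheta I = (Bsum : ℂ) := by
  rw [jacobiTheta_eq_jacobiTheta₂, jacobiTheta₂, Bsum, Complex.ofReal_tsum]
  exact tsum_congr fun n => jtterm_eq n

noncomputable def D0 : ℂ := (jacobiTheta₂_fderiv 0 I) (0, 1)

lemma hasDerivAt_jT : HasDerivAt jacobiTheta D0 I := by
  have h := ((hasFDerivAt_jacobiTheta₂ 0 (by simp : (0:ℝ) < Complex.I.im)).comp I
    (hasFDerivAt_prodMk_right 0 I)).hasDerivAt
  have he : jacobiTheta = fun τ => jacobiTheta₂ 0 τ := funext fun τ => jacobiTheta_eq_jacobiTheta₂ τ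
  rw [he]
  exact h

lemma D0_hasSum : HasSum (fun n : ℤ => (π:ℂ)*I*n^2 * jacobiTheta₂_term n 0 I) D0 := by
  have h := (ContinuousLinearMap.apply ℂ ℂ ((0:ℂ),(1:ℂ))).hasSum
    (hasSum_jacobiTheta₂_term_fderiv 0 (by simp : (0:ℝ) < Complex.I.im))
  convert h using 2 with n
  · rfl
  · simp [jacobiTheta₂_term_fderiv, jacobiTheta₂_term]
    ring
  · rfl

lemma funcEq : ∀ᶠ z : ℂ in nhds I, jacobiTheta (-z⁻¹) = (-I*z)^(1/2:ℂ) * jacobiTheta z := by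
  have hopen : IsOpen {z : ℂ | 0 < z.im} := isOpen_lt continuous_const Complex.continuous_im
  filter_upwards [hopen.mem_nhds (by simp : (0:ℝ) < Complex.I.im)] with z hz
  have := jacobiTheta_S_smul ⟨z, hz⟩
  rw [UpperHalfPlane.modular_S_smul] at this
  simpa [inv_neg] using this

lemma key : D0 = I/4 * jacobiTheta I := by
  have hφ : HasDerivAt (fun z : ℂ => -z⁻¹) (-1 : ℂ) I := by
    have := (hasDerivAt_inv I_ne_zero).neg
    refine this.congr_deriv ?_
    rw [I_sq]; norm_num
  have h1 : HasDerivAt (fun z : ℂ => jacobiTheta (-z⁻¹)) (D0 * -1) I := by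
    have hI : (-I⁻¹ : ℂ) = I := by rw [inv_I]; ring
    exact HasDerivAt.comp I (hI ▸ hasDerivAt_jT) hφ
  have ha : HasDerivAt (fun z : ℂ => -I*z) (-I) I := by
    simpa using (hasDerivAt_id I).const_mul (-I)
  have hv : (-I*I : ℂ) = 1 := by simp [I_mul_I]
  have hcp : HasDerivAt (fun z : ℂ => (-I*z)^(1/2:ℂ))
      ((1/2:ℂ) * (-I*I)^((1/2:ℂ)-1) * (-I)) I :=
    ha.cpow_const (by rw [hv]; exact one_mem_slitPlane)
  have h2 := hcp.mul hasDerivAt_jT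
  have heq := h1.congr_of_eventuallyEq (funcEq.mono fun z h => h.symm)
  have := h2.unique heq
  rw [hv, one_cpow] at this
  have hI2 : (I:ℂ) * I = -1 := I_mul_I
  rw [one_cpow] at this
  linear_combination (1/2 : ℂ) * this

lemma theta3_ne : theta3 I ≠ 0 := by
  rw [theta3_eq, jt_I]
  exact_mod_cast Bpos.ne'

lemma hsR2 : Summable (fun n : ℤ => (n:ℝ)^2 * Real.exp (-Real.pi * (n:ℝ)^2)) := by
  have h := D0_hasSum.summable.norm
  have : (fun n : ℤ => ‖(π:ℂ)*I*n^2 * jacobiTheta₂_term n 0 I‖)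
      = fun n : ℤ => π * ((n:ℝ)^2 * Real.exp (-Real.pi * (n:ℝ)^2)) := by
    funext n
    rw [jtterm_eq]
    simp only [norm_mul, norm_pow, Complex.norm_real, Complex.norm_I, Real.norm_eq_abs,
      _root_.abs_of_nonneg Real.pi_pos.le, _root_.abs_of_nonneg (Real.exp_pos _).le,
      Complex.norm_intCast]
    rw [_root_.sq_abs]; ring
  rw [this] at h
  have := h.mul_left (1/π)
  simpa [mul_assoc, Real.pi_ne_zero] using this

noncomputable def Asum : ℝ := ∑' n : ℤ, (n:ℝ)^2 * Real.exp (-Real.pi * (n:ℝ)^2)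

lemma D0_eq : D0 = (π:ℂ) * I * (Asum : ℂ) := by
  rw [← D0_hasSum.tsum_eq, Asum, Complex.ofReal_tsum, ← tsum_mul_left]
  refine tsum_congr fun n => ?_
  rw [jtterm_eq]
  push_cast
  ring

/-- the logarithmic derivative `X₃(i) = 2·θ₃'(i)/θ₃(i) = i/2`, and the
equivalent real-series identity
`∑_{n∈ℤ} n²·exp(−πn²) = (1/(4π))·∑_{n∈ℤ} exp(−πn²)`. -/
theorem theta3_log_deriv_at_i :
    (∀ D : ℂ, HasDerivAt theta3 D I → 2 * D / theta3 I = I / 2) ∧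
    (∑' n : ℤ, (n : ℝ) ^ 2 * Real.exp (-Real.pi * (n : ℝ) ^ 2)) =
      (1 / (4 * Real.pi)) * ∑' n : ℤ, Real.exp (-Real.pi * (n : ℝ) ^ 2) := by
  constructor
  · intro D hD
    rw [theta3_eq] at hD
    have hDD : D = D0 := hD.unique hasDerivAt_jT
    rw [hDD, key, theta3_eq]
    have h := theta3_ne
    rw [theta3_eq] at h
    field_simp
    ring
  · have h := key
    rw [D0_eq, jt_I] at h
    have h2 : (I:ℂ) * ((π:ℝ) * Asum : ℝ) = I * ((Bsum/4 : ℝ)) := by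
      push_cast
      linear_combination h
    have h3 : ((π:ℝ) * Asum : ℝ) = ((Bsum/4 : ℝ)) := by
      exact_mod_cast mul_left_cancel₀ I_ne_zero h2
    have h4 : π * Asum = Bsum / 4 := by exact_mod_cast h3
    have : Asum = 1/(4*π) * Bsum := by
      field_simp
      linarith
    simpa [Asum, Bsum] using this
end
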